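/- Let λ be a real number. If λ^m is a Perron number for some integer m ≥ 1 and λ > 0, then λ is a weak Perron number. -/

import Mathlib

/-- If `λ > 0` and `λ^m` is a Perron number for some `m ≥ 1`, then `λ` is a weak
Perron number. -/
theorem stmt_15 (lam : ℝ) (m : ℕ) (hm : 1 ≤ m) (hpos : 0 < lam)
    (hint : IsIntegral ℤ (lam ^ m)) (h1 : 1 ≤ lam ^ m)
    (hPerron : ∀ μ : ℂ, Polynomial.aeval μ (minpoly ℚ (lam ^ m)) = 0 →
      μ ≠ ((lam ^ m : ℝ) : ℂ) → ‖μ‖ < lam ^ m) :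
    IsIntegral ℤ lam ∧ 1 ≤ lam ∧
      ∀ μ : ℂ, Polynomial.aeval μ (minpoly ℚ lam) = 0 → ‖μ‖ ≤ lam := by
  have hm0 : m ≠ 0 := Nat.one_le_iff_ne_zero.mp hm
  -- λ is integral over ℤ
  obtain ⟨p, pmonic, peval⟩ := hint
  have hintlam : IsIntegral ℤ lam := by
    refine ⟨p.comp (Polynomial.X ^ m), pmonic.comp (Polynomial.monic_X_pow m) (by
      simp [Polynomial.natDegree_X_pow, hm0]), ?_⟩
    have : Polynomial.aeval lam (p.comp (Polynomial.X ^ m)) = 0 := by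
      rw [Polynomial.aeval_comp]
      rw [map_pow, Polynomial.aeval_X, Polynomial.aeval_def, algebraMap_int_eq]
      exact peval
    simpa [Polynomial.aeval_def] using this
  -- 1 ≤ λ
  have hlam1 : 1 ≤ lam := by
    by_contra h
    push_neg at h
    have : lam ^ m < 1 := pow_lt_one₀ hpos.le h hm0
    linarith
  refine ⟨hintlam, hlam1, ?_⟩
  -- conjugates
  have hQint : IsIntegral ℚ lam := hintlam.tower_top
  have hdvd : minpoly ℚ lam ∣ (minpoly ℚ (lam ^ m)).comp (Polynomial.X ^ m) := by
    apply minpoly.dvd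
    rw [Polynomial.aeval_comp]
    simpa using minpoly.aeval ℚ (lam ^ m)
  intro μ hμ
  have hroot : Polynomial.aeval (μ ^ m) (minpoly ℚ (lam ^ m)) = 0 := by
    obtain ⟨c, hc⟩ := hdvd
    have : Polynomial.aeval μ ((minpoly ℚ (lam ^ m)).comp (Polynomial.X ^ m)) = 0 := by
      rw [hc, map_mul, hμ, zero_mul]
    rw [Polynomial.aeval_comp] at this
    simpa using this
  by_cases heq : μ ^ m = ((lam ^ m : ℝ) : ℂ)
  · have habs : ‖μ‖ ^ m = lam ^ m := by
      have := congrArg (‖·‖) heq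
      rw [norm_pow] at this
      rwa [Complex.norm_real, Real.norm_eq_abs, abs_of_pos (pow_pos hpos m)] at this
    exact ((pow_left_inj₀ (by positivity) hpos.le hm0).mp habs).le
  · have := hPerron (μ ^ m) hroot heq
    rw [norm_pow] at this
    exact le_of_lt (lt_of_pow_lt_pow_left₀ m hpos.le this)
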